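/- Let a:(-∞,0]→[0,1] be a monotone non-decreasing function such that for some constants B>0 and δ>0 the inequality t·a(s) ≤ B·a(s+t)^{1+δ} holds for all s ≤ 0 and t ∈ [0,1] with s+t ≤ 0. Then for all S < 0 with a(S) > 0 and all D ∈ [0,1] with S+D ≤ 0, one has D ≤ e·(3+2/δ)·B·a(S+D)^δ. -/

import Mathlib

/-- Kolodziej's iteration lemma. -/
theorem kolodziej_iteration (a : ℝ → ℝ) (B δ : ℝ) (hB : 0 < B) (hδ : 0 < δ)
    (hrange : ∀ s ≤ (0:ℝ), a s ∈ Set.Icc (0:ℝ) 1)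
    (hmono : ∀ s t : ℝ, s ≤ t → t ≤ 0 → a s ≤ a t)
    (hiter : ∀ s ≤ (0:ℝ), ∀ t ∈ Set.Icc (0:ℝ) 1, s + t ≤ 0 →
      t * a s ≤ B * a (s + t) ^ (1 + δ))
    (S : ℝ) (hS : S < 0) (haS : 0 < a S)
    (D : ℝ) (hD : D ∈ Set.Icc (0:ℝ) 1) (hSD : S + D ≤ 0) :
    D ≤ Real.exp 1 * (3 + 2 / δ) * B * a (S + D) ^ δ := by
  obtain ⟨hD0, hD1⟩ := hD
  have hSle : S ≤ 0 := hS.le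
  set d := a (S + D) with hd_def
  have hd_pos : 0 < d := lt_of_lt_of_le haS (hmono S (S + D) (by linarith) hSD)
  have hd_le1 : d ≤ 1 := (hrange (S + D) hSD).2
  have hdδ_pos : 0 < d ^ δ := Real.rpow_pos_of_pos hd_pos δ
  set q := (1/2 : ℝ) ^ δ with hq_def
  have hq_pos : 0 < q := Real.rpow_pos_of_pos (by norm_num) δ
  have hq_lt1 : q < 1 := Real.rpow_lt_one (by norm_num) (by norm_num) hδ
  -- main induction on levels
  have main : ∀ n : ℕ, ∀ s, S ≤ s → s ≤ S + D → d * (1/2 : ℝ) ^ n ≤ a s →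
      S + D - s ≤ B * d ^ δ + 2 * B * d ^ δ * ∑ k ∈ Finset.range n, q ^ k := by
    intro n
    induction n with
    | zero =>
      intro s hSs hsSD has
      simp only [pow_zero, mul_one] at has
      simp only [Finset.range_zero, Finset.sum_empty, mul_zero, add_zero]
      have h0 : s ≤ 0 := le_trans hsSD hSD
      have := hiter s h0 (S + D - s) ⟨by linarith, by linarith⟩ (by linarith)
      rw [show s + (S + D - s) = S + D by ring] at this
      have hpow : d ^ (1 + δ) = d * d ^ δ := by
        rw [Real.rpow_add hd_pos, Real.rpow_one]
      rw [← hd_def, hpow] at this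
      have h2 : (S + D - s) * d ≤ B * (d * d ^ δ) :=
        le_trans (by nlinarith) this
      nlinarith
    | succ n ih =>
      intro s hSs hsSD has
      set c := d * (1/2 : ℝ) ^ n with hc_def
      have hc_pos : 0 < c := by positivity
      have hcd : c ≤ d := by
        have : ((1:ℝ)/2) ^ n ≤ 1 :=
          pow_le_one₀ (by norm_num) (by norm_num)
        nlinarith
      set A := {u : ℝ | S ≤ u ∧ u ≤ S + D ∧ c ≤ a u} with hA_def
      have hA_mem : S + D ∈ A := ⟨by linarith, le_rfl, by rw [← hd_def]; exact hcd⟩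
      have hA_ne : A.Nonempty := ⟨S + D, hA_mem⟩
      have hA_bdd : BddBelow A := ⟨S, fun u hu => hu.1⟩
      set m := sInf A with hm_def
      have hmS : S ≤ m := le_csInf hA_ne fun u hu => hu.1
      have hm_le : m ≤ S + D := csInf_le hA_bdd hA_mem
      -- Part 1: from m to S+D, use the induction hypothesis
      have h1 : S + D - m ≤ B * d ^ δ + 2 * B * d ^ δ * ∑ k ∈ Finset.range n, q ^ k := by
        have : S + D - (B * d ^ δ + 2 * B * d ^ δ * ∑ k ∈ Finset.range n, q ^ k) ≤ m := by
          apply le_csInf hA_ne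
          intro u hu
          have := ih u hu.1 hu.2.1 hu.2.2
          linarith
        linarith
      -- Part 2: from s to m, one application of the hypothesis
      have hqn : ((1/2 : ℝ) ^ n : ℝ) ^ δ = q ^ n := by
        rw [← Real.rpow_natCast (1/2 : ℝ) n, ← Real.rpow_mul (by norm_num), mul_comm,
          Real.rpow_mul (by norm_num), Real.rpow_natCast]
      set X := 2 * B * d ^ δ * q ^ n with hX_def
      have hX_pos : 0 < X := by positivity
      have h2 : m ≤ s + X := by
        by_contra hcon
        push_neg at hcon
        obtain ⟨v, hv1, hv2⟩ := exists_between hcon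
        have hvs : s < v := lt_of_le_of_lt (by linarith) hv1
        have hvS : S ≤ v := le_trans hSs hvs.le
        have hvSD : v ≤ S + D := le_trans hv2.le hm_le
        have hvA : v ∉ A := fun h => absurd (csInf_le hA_bdd h) (not_le.mpr hv2)
        have hav : a v < c := by
          by_contra h
          exact hvA ⟨hvS, hvSD, not_lt.mp h⟩
        have h0 : s ≤ 0 := le_trans hsSD hSD
        have hiters := hiter s h0 (v - s) ⟨by linarith, by linarith⟩ (by linarith)
        rw [show s + (v - s) = v by ring] at hiters
        have hav0 : 0 ≤ a v := (hrange v (by linarith)).1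
        have havc : a v ^ (1 + δ) ≤ c ^ (1 + δ) :=
          Real.rpow_le_rpow hav0 hav.le (by linarith)
        have hasl : d * (1/2 : ℝ) ^ (n + 1) ≤ a s := has
        -- compute c ^ (1 + δ)
        have hceq : c ^ (1 + δ) = (d * d ^ δ) * ((1/2 : ℝ) ^ n * q ^ n) := by
          rw [hc_def, Real.mul_rpow hd_pos.le (by positivity),
            Real.rpow_add hd_pos, Real.rpow_one,
            Real.rpow_add (by positivity : (0:ℝ) < (1/2 : ℝ) ^ n), Real.rpow_one, hqn]
        have key : (v - s) * (d * (1/2 : ℝ) ^ (n + 1)) ≤ B * c ^ (1 + δ) := by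
          calc (v - s) * (d * (1/2 : ℝ) ^ (n + 1)) ≤ (v - s) * a s :=
              mul_le_mul_of_nonneg_left hasl (by linarith : (0:ℝ) ≤ v - s)
          _ ≤ B * a v ^ (1 + δ) := hiters
          _ ≤ B * c ^ (1 + δ) := mul_le_mul_of_nonneg_left havc hB.le
        rw [hceq] at key
        have hxeq : B * ((d * d ^ δ) * ((1/2 : ℝ) ^ n * q ^ n)) =
            X * (d * (1/2 : ℝ) ^ (n + 1)) := by
          rw [hX_def, pow_succ]
          ring
        rw [hxeq] at key
        have hvsX : v - s ≤ X := by
          have hpos : 0 < d * (1/2 : ℝ) ^ (n + 1) := by positivity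
          exact le_of_mul_le_mul_right (by linarith [key]) hpos
        linarith
      have hsum : (∑ k ∈ Finset.range (n + 1), q ^ k) =
          (∑ k ∈ Finset.range n, q ^ k) + q ^ n := Finset.sum_range_succ _ _
      rw [hsum]
      have : S + D - s ≤ (B * d ^ δ + 2 * B * d ^ δ * ∑ k ∈ Finset.range n, q ^ k) + X := by
        linarith
      rw [hX_def] at this
      linarith [this]
  -- choose n with d * (1/2)^n ≤ a S
  obtain ⟨n, hn⟩ := exists_pow_lt_of_lt_one haS (by norm_num : (1/2 : ℝ) < 1)
  have hstart : d * (1/2 : ℝ) ^ n ≤ a S := by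
    have h1 : d * (1/2 : ℝ) ^ n ≤ (1/2 : ℝ) ^ n := by
      nlinarith [pow_pos (by norm_num : (0:ℝ) < 1/2) n]
    linarith [hn]
  have hmain := main n S le_rfl (by linarith) hstart
  -- geometric sum bound
  have hsum_le : (∑ k ∈ Finset.range n, q ^ k) ≤ 1 / (1 - q) := by
    rw [geom_sum_eq (ne_of_lt hq_lt1)]
    have h1 : (q ^ n - 1) / (q - 1) = (1 - q ^ n) / (1 - q) := by
      rw [div_eq_div_iff (by linarith) (by linarith)]
      ring
    rw [h1]
    have hqn0 : 0 ≤ q ^ n := by positivity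
    gcongr
    · linarith
  -- analytic estimate : 1 + 2/(1-q) ≤ e * (3 + 2/δ)
  set L := Real.log 2 with hL_def
  have hL : (1:ℝ)/2 ≤ L := by
    have := Real.log_two_gt_d9
    rw [hL_def]; linarith
  have hqexp : q = Real.exp (-(L * δ)) := by
    rw [hq_def, Real.rpow_def_of_pos (by norm_num : (0:ℝ) < 1/2)]
    congr 1
    rw [show (1:ℝ)/2 = (2:ℝ)⁻¹ by norm_num, Real.log_inv]
    ring
  have hexp_ge : L * δ + 1 ≤ Real.exp (L * δ) := Real.add_one_le_exp _
  have hqmul : q * Real.exp (L * δ) = 1 := by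
    rw [hqexp, ← Real.exp_add]; simp
  have hLδ : 0 < L * δ := by nlinarith
  have hq_upper : q * (1 + L * δ) ≤ 1 := by
    calc q * (1 + L * δ) ≤ q * Real.exp (L * δ) :=
        mul_le_mul_of_nonneg_left (by linarith) hq_pos.le
    _ = 1 := hqmul
  have h1q_pos : 0 < 1 - q := by linarith
  have hfrac : 1 / (1 - q) ≤ (1 + L * δ) / (L * δ) := by
    rw [div_le_div_iff₀ h1q_pos hLδ]
    linarith
  have hfrac2 : (1 + L * δ) / (L * δ) ≤ 2 / δ + 1 := by
    rw [div_le_iff₀ hLδ]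
    have h3 : (2 / δ + 1) * (L * δ) = 2 * L + L * δ := by field_simp
    linarith
  have he : (2:ℝ) ≤ Real.exp 1 := by
    have := Real.exp_one_gt_d9; linarith
  have hfinal : 1 + 2 * (1 / (1 - q)) ≤ Real.exp 1 * (3 + 2 / δ) := by
    have h4 : 1 / (1 - q) ≤ 2 / δ + 1 := hfrac.trans hfrac2
    have h5 : 0 < 2 / δ := by positivity
    have h8 : 2 * (2 / δ) ≤ Real.exp 1 * (2 / δ) :=
      mul_le_mul_of_nonneg_right he h5.le
    have h7 : Real.exp 1 * (3 + 2 / δ) = 3 * Real.exp 1 + Real.exp 1 * (2 / δ) := by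
      ring
    linarith
  -- assemble
  have hD_le : D ≤ B * d ^ δ * (1 + 2 * (1 / (1 - q))) := by
    have h6 : 2 * B * d ^ δ * (∑ k ∈ Finset.range n, q ^ k) ≤
        2 * B * d ^ δ * (1 / (1 - q)) := by
      apply mul_le_mul_of_nonneg_left hsum_le (by positivity)
    have : S + D - S ≤ B * d ^ δ + 2 * B * d ^ δ * (1 / (1 - q)) := by linarith
    calc D = S + D - S := by ring
    _ ≤ B * d ^ δ + 2 * B * d ^ δ * (1 / (1 - q)) := this
    _ = B * d ^ δ * (1 + 2 * (1 / (1 - q))) := by ring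
  calc D ≤ B * d ^ δ * (1 + 2 * (1 / (1 - q))) := hD_le
  _ ≤ B * d ^ δ * (Real.exp 1 * (3 + 2 / δ)) := by
      apply mul_le_mul_of_nonneg_left hfinal (by positivity)
  _ = Real.exp 1 * (3 + 2 / δ) * B * d ^ δ := by ring
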